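/- Let X, Y be completely regular Hausdorff topological spaces and E, F nonzero Hausdorff topological real vector spaces. Let A(X,E) = C(X,E) or C_*(X,E) and A(Y,F) = C(Y,F) or C_*(Y,F), and suppose T: A(X,E) → A(Y,F) is a biseparating map. Then there exists a homeomorphism φ: βX → βY such that for all f, g ∈ A(X,E) and every open set U ⊆ βX: f = g on U ∩ X if and only if Tf = Tg on φ(U) ∩ Y. -/

import Mathlib

set_option linter.unusedSectionVars false


open Set

namespace Stmt4

variable {X Y E F : Type*}

/-- The space of continuous functions, as a set of functions. -/
def Cset (X E : Type*) [TopologicalSpace X] [TopologicalSpace E] : Set (X → E) :=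
  {f | Continuous f}

/-- The space of bounded continuous functions (image von Neumann bounded, i.e. absorbed
by every neighborhood of `0`), as a set of functions. -/
def CbSet (X E : Type*) [TopologicalSpace X] [TopologicalSpace E]
    [AddCommGroup E] [Module ℝ E] : Set (X → E) :=
  {f | Continuous f ∧ Bornology.IsVonNBounded ℝ (Set.range f)}

/-- `T` is biseparating: a bijection such that `f, g` are disjoint with respect to `h`
iff `Tf, Tg` are disjoint with respect to `Th`. -/
def Biseparating {A : Set (X → E)} {B : Set (Y → F)} (T : A → B) : Prop :=
  Function.Bijective T ∧ ∀ f g h : A,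
    ({x | (f : X → E) x ≠ (h : X → E) x} ∩ {x | (g : X → E) x ≠ (h : X → E) x} = ∅ ↔
      {y | (T f : Y → F) y ≠ (T h : Y → F) y} ∩ {y | (T g : Y → F) y ≠ (T h : Y → F) y} = ∅)

section Core

variable [TopologicalSpace X] [TopologicalSpace Y]
  [TopologicalSpace E] [AddCommGroup E] [Module ℝ E]
  [TopologicalSpace F] [AddCommGroup F] [Module ℝ F]

/-- The closure properties of a function space that we need. -/
structure Good (A : Set (X → E)) : Prop where
  cont : ∀ f ∈ A, Continuous f
  const : ∀ e : E, (fun _ : X => e) ∈ A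
  mix : ∀ f ∈ A, ∀ g ∈ A, ∀ u : X → ℝ, Continuous u → (∀ x, u x ∈ Icc (0:ℝ) 1) →
      (fun x => f x + u x • (g x - f x)) ∈ A

lemma disj_iff {α β : Type*} {f g h : α → β} :
    ({x | f x ≠ h x} ∩ {x | g x ≠ h x} = ∅) ↔ ∀ x, f x = h x ∨ g x = h x := by
  rw [Set.eq_empty_iff_forall_notMem]
  refine forall_congr' fun x => ?_
  simp only [mem_inter_iff, mem_setOf_eq, not_and_or, not_not, not_ne_iff]

variable {A : Set (X → E)} {B : Set (Y → F)}

lemma dich (T : A → B) (hT : Biseparating T) (f g h : A)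
    (hfg : ∀ x, (f : X → E) x = (h : X → E) x ∨ (g : X → E) x = (h : X → E) x) (y : Y) :
    (T f : Y → F) y = (T h : Y → F) y ∨ (T g : Y → F) y = (T h : Y → F) y :=
  disj_iff.mp ((hT.2 f g h).mp (disj_iff.mpr hfg)) y

lemma move (T : A → B) (hT : Biseparating T) {f g w : A} {y : Y}
    (hy : (T f : Y → F) y ≠ (T g : Y → F) y)
    (hw : ∀ x, (w : X → E) x = (f : X → E) x ∨ (f : X → E) x = (g : X → E) x) :
    (T w : Y → F) y = (T f : Y → F) y := by
  rcases dich T hT w g f (fun x => (hw x).imp id Eq.symm) y with h | h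
  · exact h
  · exact absurd h.symm hy

lemma sep (T : A → B) (hA : Good A) (hT : Biseparating T) {f g f' g' : A} {y : Y}
    (hcl : Disjoint (closure (stoneCechUnit '' {x | (f : X → E) x ≠ (g : X → E) x}))
      (closure (stoneCechUnit '' {x | (f' : X → E) x ≠ (g' : X → E) x})))
    (hfg : (T f : Y → F) y ≠ (T g : Y → F) y) :
    (T f' : Y → F) y = (T g' : Y → F) y := by
  by_contra hfg'
  obtain ⟨v, hv0, hv1, hv01⟩ := exists_continuous_zero_one_of_isClosed
    isClosed_closure isClosed_closure hcl
  have hvx : ∀ x : X, (f : X → E) x ≠ (g : X → E) x → v (stoneCechUnit x) = 0 := fun x hx =>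
    hv0 (subset_closure (mem_image_of_mem _ hx))
  have hvx' : ∀ x : X, (f' : X → E) x ≠ (g' : X → E) x → v (stoneCechUnit x) = 1 := fun x hx =>
    hv1 (subset_closure (mem_image_of_mem _ hx))
  set u : X → ℝ := fun x => v (stoneCechUnit x) with hu
  have hucont : Continuous u := v.continuous.comp continuous_stoneCechUnit
  have hurange : ∀ x, u x ∈ Icc (0:ℝ) 1 := fun x => hv01 _
  set w : A := ⟨fun x => (f : X → E) x + u x • ((f' : X → E) x - (f : X → E) x),
    hA.mix _ f.2 _ f'.2 u hucont hurange⟩ with hwdef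
  set z : A := ⟨fun x => (g : X → E) x + u x • ((f' : X → E) x - (g : X → E) x),
    hA.mix _ g.2 _ f'.2 u hucont hurange⟩ with hzdef
  have hw1 : (T w : Y → F) y = (T f : Y → F) y := by
    refine move T hT hfg fun x => ?_
    by_cases hx : (f : X → E) x = (g : X → E) x
    · exact Or.inr hx
    · left
      show (f : X → E) x + u x • ((f' : X → E) x - (f : X → E) x) = (f : X → E) x
      rw [show u x = 0 from hvx x hx]; simp
  have hw2 : (T w : Y → F) y = (T f' : Y → F) y := by
    refine move T hT hfg' fun x => ?_
    by_cases hx : (f' : X → E) x = (g' : X → E) x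
    · exact Or.inr hx
    · left
      show (f : X → E) x + u x • ((f' : X → E) x - (f : X → E) x) = (f' : X → E) x
      rw [show u x = 1 from hvx' x hx]; simp
  have hz1 : (T z : Y → F) y = (T g : Y → F) y := by
    refine move T hT hfg.symm fun x => ?_
    by_cases hx : (f : X → E) x = (g : X → E) x
    · exact Or.inr hx.symm
    · left
      show (g : X → E) x + u x • ((f' : X → E) x - (g : X → E) x) = (g : X → E) x
      rw [show u x = 0 from hvx x hx]; simp
  have hz2 : (T z : Y → F) y = (T f' : Y → F) y := by
    refine move T hT hfg' fun x => ?_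
    by_cases hx : (f' : X → E) x = (g' : X → E) x
    · exact Or.inr hx
    · left
      show (g : X → E) x + u x • ((f' : X → E) x - (g : X → E) x) = (f' : X → E) x
      rw [show u x = 1 from hvx' x hx]; simp
  exact hfg (by rw [← hw1, hw2, ← hz2, hz1])

/-- The set of support points in `βX` associated to `y : Y`. -/
def sigmaSet (T : A → B) (y : Y) : Set (StoneCech X) :=
  {p | ∀ W : Set (StoneCech X), IsOpen W → p ∈ W →
    ∃ f g : A, (∀ x : X, (f : X → E) x ≠ (g : X → E) x → stoneCechUnit x ∈ W) ∧
      (T f : Y → F) y ≠ (T g : Y → F) y}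

lemma sigma_nonempty [Nontrivial F] (T : A → B) (hA : Good A) (hB : Good B)
    (hT : Biseparating T) (y : Y) : (sigmaSet T y).Nonempty := by
  classical
  obtain ⟨a, b, hab⟩ := exists_pair_ne F
  obtain ⟨f0, hf0⟩ := hT.1.2 ⟨fun _ => a, hB.const a⟩
  obtain ⟨g0, hg0⟩ := hT.1.2 ⟨fun _ => b, hB.const b⟩
  have hpair : (T f0 : Y → F) y ≠ (T g0 : Y → F) y := by
    rw [hf0, hg0]; exact hab
  by_contra hemp
  rw [Set.not_nonempty_iff_eq_empty] at hemp
  have h1 : ∀ p : StoneCech X, ∃ W : Set (StoneCech X), IsOpen W ∧ p ∈ W ∧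
      ∀ f g : A, (∀ x : X, (f : X → E) x ≠ (g : X → E) x → stoneCechUnit x ∈ W) →
        (T f : Y → F) y = (T g : Y → F) y := by
    intro p
    have hp : p ∉ sigmaSet T y := by rw [hemp]; exact notMem_empty p
    simp only [sigmaSet, mem_setOf_eq] at hp
    push_neg at hp
    obtain ⟨W, hWo, hpW, hW⟩ := hp
    exact ⟨W, hWo, hpW, fun f g hfg => hW f g hfg⟩
  choose W hWo hWm hWnull using h1
  obtain ⟨t, ht⟩ := isCompact_univ.elim_finite_subcover W hWo
    (fun p _ => mem_iUnion.mpr ⟨p, hWm p⟩)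
  obtain ⟨pou, hsub⟩ := PartitionOfUnity.exists_isSubordinate
    (s := (univ : Set (StoneCech X))) isClosed_univ (fun i : t => W i)
    (fun i => hWo i)
    (fun p _ => by
      rcases mem_iUnion₂.mp (ht (mem_univ p)) with ⟨i, hi, hp⟩
      exact mem_iUnion.mpr ⟨⟨i, hi⟩, hp⟩)
  set n := t.card with hn
  set e : Fin n ≃ {i // i ∈ t} := t.equivFin.symm with he
  set v : ℕ → StoneCech X → ℝ :=
    fun j q => if h : j < n then pou (e ⟨j, h⟩) q else 0 with hv
  have hvcont : ∀ j, Continuous (v j) := by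
    intro j
    by_cases h : j < n
    · simpa [hv, h] using (pou (e ⟨j, h⟩)).continuous
    · simpa [hv, h] using continuous_const
  have hvnn : ∀ j q, 0 ≤ v j q := by
    intro j q
    by_cases h : j < n <;> simp [hv, h]
    exact pou.nonneg _ _
  set S : ℕ → StoneCech X → ℝ := fun k q => ∑ j ∈ Finset.range k, v j q with hS
  have hScont : ∀ k, Continuous (S k) := fun k =>
    continuous_finset_sum _ fun j _ => hvcont j
  have hSn : ∀ q, S n q = 1 := by
    intro q
    have h1 : S n q = ∑ j : Fin n, pou (e j) q := by
      show (∑ j ∈ Finset.range n, v j q) = _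
      rw [Finset.sum_range fun j => v j q]
      exact Finset.sum_congr rfl fun j _ => by simp [hv, j.isLt]
    rw [h1, Equiv.sum_comp e (fun i => pou i q)]
    rw [← finsum_eq_sum_of_fintype (fun i => pou i q)]
    exact pou.sum_eq_one (mem_univ q)
  have hSnn : ∀ k q, 0 ≤ S k q := fun k q =>
    Finset.sum_nonneg fun j _ => hvnn j q
  have hSle : ∀ k q, S k q ≤ 1 := by
    intro k q
    have h1 : S k q ≤ S (max k n) q := by
      refine Finset.sum_le_sum_of_subset_of_nonneg
        (Finset.range_subset_range.mpr (le_max_left _ _)) fun j _ _ => hvnn j q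
    have h2 : S (max k n) q = S n q := by
      refine (Finset.sum_subset (Finset.range_subset_range.mpr (le_max_right _ _)) ?_).symm
      intro j hj hj'
      have : ¬ j < n := fun h => hj' (Finset.mem_range.mpr h)
      simp [hv, this]
    rw [h2, hSn q] at h1
    exact h1
  set G : ℕ → A := fun k =>
    ⟨fun x => (g0 : X → E) x + S k (stoneCechUnit x) • ((f0 : X → E) x - (g0 : X → E) x),
      hA.mix _ g0.2 _ f0.2 _ ((hScont k).comp continuous_stoneCechUnit)
        (fun x => ⟨hSnn k _, hSle k _⟩)⟩ with hG
  have hstep : ∀ k, (T (G (k + 1)) : Y → F) y = (T (G k) : Y → F) y := by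
    intro k
    by_cases hk : k < n
    · refine hWnull (e ⟨k, hk⟩) (G (k+1)) (G k) ?_
      intro x hx
      have hvk : v k (stoneCechUnit x) ≠ 0 := by
        intro h0
        apply hx
        show (g0 : X → E) x + S (k+1) (stoneCechUnit x) • _ =
          (g0 : X → E) x + S k (stoneCechUnit x) • _
        have : S (k+1) (stoneCechUnit x) = S k (stoneCechUnit x) := by
          rw [hS]; simp only [Finset.sum_range_succ]; rw [h0, add_zero]
        rw [this]
      have hpk : pou (e ⟨k, hk⟩) (stoneCechUnit x) ≠ 0 := by
        simpa [hv, hk] using hvk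
      exact hsub (e ⟨k, hk⟩) (subset_closure (by exact hpk))
    · have : G (k+1) = G k := by
        apply Subtype.ext
        funext x
        show (g0 : X → E) x + S (k+1) (stoneCechUnit x) • _ =
          (g0 : X → E) x + S k (stoneCechUnit x) • _
        have : S (k+1) (stoneCechUnit x) = S k (stoneCechUnit x) := by
          rw [hS]; simp only [Finset.sum_range_succ]
          rw [show v k (stoneCechUnit x) = 0 by simp [hv, hk], add_zero]
        rw [this]
      rw [this]
  have hchain : ∀ k, (T (G k) : Y → F) y = (T (G 0) : Y → F) y := by
    intro k
    induction k with
    | zero => rfl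
    | succ k ih => rw [hstep k, ih]
  have hG0 : G 0 = g0 := by
    apply Subtype.ext; funext x
    show (g0 : X → E) x + S 0 (stoneCechUnit x) • _ = _
    simp [hS]
  have hGn : G n = f0 := by
    apply Subtype.ext; funext x
    show (g0 : X → E) x + S n (stoneCechUnit x) • _ = _
    rw [hSn]; simp
  apply hpair
  have := hchain n
  rw [hG0, hGn] at this
  exact this

noncomputable def phi0 (T : A → B) (hne : ∀ y : Y, (sigmaSet T y).Nonempty) (y : Y) :
    StoneCech X :=
  (hne y).choose

lemma phi0_mem (T : A → B) (hne : ∀ y : Y, (sigmaSet T y).Nonempty) (y : Y) :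
    phi0 T hne y ∈ sigmaSet T y :=
  (hne y).choose_spec

lemma key (T : A → B) (hA : Good A) (hT : Biseparating T)
    (hne : ∀ y : Y, (sigmaSet T y).Nonempty) {f g : A} {y : Y}
    (h : (T f : Y → F) y ≠ (T g : Y → F) y) :
    phi0 T hne y ∈ closure (stoneCechUnit '' {x | (f : X → E) x ≠ (g : X → E) x}) := by
  by_contra hout
  obtain ⟨W, hWo, hsub, hcl⟩ := normal_exists_closure_subset
    (isClosed_singleton (x := phi0 T hne y)) isClosed_closure.isOpen_compl
    (singleton_subset_iff.mpr hout)
  obtain ⟨f₁, g₁, hD₁, hne₁⟩ := phi0_mem T hne y W hWo (singleton_subset_iff.mp hsub)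
  have hsep : Disjoint
      (closure (stoneCechUnit '' {x | (f₁ : X → E) x ≠ (g₁ : X → E) x}))
      (closure (stoneCechUnit '' {x | (f : X → E) x ≠ (g : X → E) x})) := by
    have hsub2 : closure (stoneCechUnit '' {x | (f₁ : X → E) x ≠ (g₁ : X → E) x}) ⊆
        closure W := closure_mono (by rintro _ ⟨x, hx, rfl⟩; exact hD₁ x hx)
    exact disjoint_left.mpr fun p hp hp' => hcl (hsub2 hp) hp'
  exact h (sep T hA hT hsep hne₁)

lemma phi0_continuous [T2Space F] (T : A → B) (hA : Good A) (hB : Good B)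
    (hT : Biseparating T) (hne : ∀ y : Y, (sigmaSet T y).Nonempty) :
    Continuous (phi0 T hne) := by
  rw [continuous_iff_continuousAt]
  intro y₀
  rw [ContinuousAt, tendsto_nhds]
  intro N hNo hmem
  obtain ⟨N', hN'o, hpN', hclN'⟩ := normal_exists_closure_subset
    (isClosed_singleton (x := phi0 T hne y₀)) hNo (singleton_subset_iff.mpr hmem)
  obtain ⟨f, g, hD, hfg⟩ := phi0_mem T hne y₀ N' hN'o (singleton_subset_iff.mp hpN')
  have hVo : IsOpen {y | (T f : Y → F) y ≠ (T g : Y → F) y} :=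
    (isClosed_eq (hB.cont _ (T f).2) (hB.cont _ (T g).2)).isOpen_compl
  refine Filter.mem_of_superset (hVo.mem_nhds hfg) ?_
  intro y hy
  have hk := key T hA hT hne (f := f) (g := g) hy
  have hsub : closure (stoneCechUnit '' {x | (f : X → E) x ≠ (g : X → E) x}) ⊆ N :=
    (closure_mono (by rintro _ ⟨x, hx, rfl⟩; exact hD x hx)).trans hclN'
  exact hsub hk

lemma compat [Nontrivial E] [T2Space F]
    (T : A → B) (S : B → A) (hA : Good A) (hB : Good B)
    (hT : Biseparating T) (hS : Biseparating S)
    (hST : ∀ a : A, S (T a) = a)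
    (hneT : ∀ y : Y, (sigmaSet T y).Nonempty)
    (hneS : ∀ x : X, (sigmaSet S x).Nonempty) (x : X) :
    stoneCechExtend (phi0_continuous T hA hB hT hneT) (phi0 S hneS x) = stoneCechUnit x := by
  set φb := stoneCechExtend (phi0_continuous T hA hB hT hneT) with hφb
  by_contra hnex
  obtain ⟨Oq, Ox, hOqo, hOxo, hq, hx, hdisj⟩ := t2_separation hnex
  obtain ⟨W, hWo, hWx, hWcl⟩ := normal_exists_closure_subset
    (isClosed_singleton (x := stoneCechUnit x)) hOxo (singleton_subset_iff.mpr hx)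
  obtain ⟨a, b, hab⟩ := exists_pair_ne E
  have hdisj2 : Disjoint Wᶜ ({stoneCechUnit x} : Set (StoneCech X)) := by
    rw [Set.disjoint_left]
    intro p hp hpx
    rw [mem_singleton_iff.mp hpx] at hp
    exact hp (hWx rfl)
  obtain ⟨v, hv0, hv1, hv01⟩ := exists_continuous_zero_one_of_isClosed
    hWo.isClosed_compl isClosed_singleton hdisj2
  set u : X → ℝ := fun x' => v (stoneCechUnit x') with hu
  have hucont : Continuous u := v.continuous.comp continuous_stoneCechUnit
  have hurange : ∀ x', u x' ∈ Icc (0:ℝ) 1 := fun x' => hv01 _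
  set g0 : A := ⟨fun _ => b, hA.const b⟩ with hg0
  set f1 : A := ⟨fun x' => b + u x' • (a - b),
    hA.mix _ (hA.const b) _ (hA.const a) u hucont hurange⟩ with hf1
  have hfx : (f1 : X → E) x ≠ (g0 : X → E) x := by
    show b + u x • (a - b) ≠ b
    have h1 : u x = 1 := hv1 rfl
    rw [h1, one_smul]
    simpa [sub_eq_zero] using sub_ne_zero_of_ne hab
  have hD : ∀ x', (f1 : X → E) x' ≠ (g0 : X → E) x' → stoneCechUnit x' ∈ W := by
    intro x' hx'
    by_contra hW'
    have h0 : u x' = 0 := hv0 hW'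
    exact hx' (by show b + u x' • (a - b) = b; rw [h0, zero_smul, add_zero])
  have hxk : (S (T f1) : X → E) x ≠ (S (T g0) : X → E) x := by
    rw [hST, hST]; exact hfx
  have hk := key S hB hS hneS hxk
  have hNo : IsOpen (φb ⁻¹' Oq) := hOqo.preimage (continuous_stoneCechExtend _)
  have hNx : phi0 S hneS x ∈ φb ⁻¹' Oq := hq
  obtain ⟨z, hzO, hzs⟩ := mem_closure_iff.mp hk _ hNo hNx
  obtain ⟨y, hyD, rfl⟩ := hzs
  have hyD' : (T f1 : Y → F) y ≠ (T g0 : Y → F) y := hyD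
  have h1 : phi0 T hneT y ∈ closure
      (stoneCechUnit '' {x' | (f1 : X → E) x' ≠ (g0 : X → E) x'}) :=
    key T hA hT hneT hyD'
  have h2 : phi0 T hneT y ∈ Ox := by
    refine hWcl ((closure_mono ?_) h1)
    rintro _ ⟨x', hx', rfl⟩
    exact hD x' hx'
  have h3 : phi0 T hneT y ∈ Oq := by
    have heq : φb (stoneCechUnit y) = phi0 T hneT y :=
      congrFun (stoneCechExtend_extends (phi0_continuous T hA hB hT hneT)) y
    rw [← heq]
    exact hzO
  exact Set.disjoint_left.mp hdisj h3 h2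

end Core

section GoodInstances

open scoped Pointwise

variable [TopologicalSpace X] [TopologicalSpace E] [AddCommGroup E] [Module ℝ E]
  [IsTopologicalAddGroup E] [ContinuousSMul ℝ E]

lemma good_cset : Good (Cset X E) where
  cont := fun _ hf => hf
  const := fun _ => continuous_const
  mix := fun f hf g hg u hu _ => hf.add (hu.smul (hg.sub hf))

lemma good_cbset : Good (CbSet X E) where
  cont := fun _ hf => hf.1
  const := fun e => ⟨continuous_const,
    (Bornology.isVonNBounded_singleton e).subset Set.range_const_subset⟩
  mix := fun f hf g hg u hu hr => by
    refine ⟨hf.1.add (hu.smul (hg.1.sub hf.1)), ?_⟩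
    intro V hV
    obtain ⟨W, hW, hWV⟩ := exists_nhds_zero_half hV
    obtain ⟨W', ⟨hW'mem, hW'bal⟩, hW'W⟩ := (nhds_basis_balanced ℝ E).mem_iff.mp hW
    have h1 : Absorbs ℝ W' (Set.range f) := hf.2 hW'mem
    have h2 : Absorbs ℝ W' (Set.range g - Set.range f) := (hg.2.sub hf.2) hW'mem
    filter_upwards [h1, h2] with c hc1 hc2
    rintro _ ⟨x, rfl⟩
    have hm1 : f x ∈ c • W' := hc1 (mem_range_self x)
    obtain ⟨w1, hw1, hw1e⟩ := Set.mem_smul_set.mp hm1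
    have hm2 : g x - f x ∈ c • W' :=
      hc2 (Set.sub_mem_sub (mem_range_self x) (mem_range_self x))
    obtain ⟨w2, hw2, hw2e⟩ := Set.mem_smul_set.mp hm2
    have hmem : w1 + u x • w2 ∈ V := by
      refine hWV _ (hW'W hw1) _ (hW'W ?_)
      refine hW'bal.smul_mem ?_ hw2
      rw [Real.norm_eq_abs, abs_le]
      exact ⟨le_trans (by norm_num) (hr x).1, (hr x).2⟩
    exact Set.mem_smul_set.mpr ⟨w1 + u x • w2, hmem, by
      rw [smul_add, hw1e, smul_comm, hw2e]⟩

end GoodInstances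

section Inv

variable [TopologicalSpace X] [TopologicalSpace Y]
  [TopologicalSpace E] [AddCommGroup E] [Module ℝ E]
  [TopologicalSpace F] [AddCommGroup F] [Module ℝ F]
  {A : Set (X → E)} {B : Set (Y → F)}

lemma biseparating_inv (T : A → B) (hT : Biseparating T) :
    Biseparating (fun b : B => (Equiv.ofBijective T hT.1).symm b) := by
  refine ⟨(Equiv.ofBijective T hT.1).symm.bijective, fun f g h => ?_⟩
  have h1 := hT.2 ((Equiv.ofBijective T hT.1).symm f) ((Equiv.ofBijective T hT.1).symm g)
    ((Equiv.ofBijective T hT.1).symm h)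
  have e1 : T ((Equiv.ofBijective T hT.1).symm f) = f :=
    (Equiv.ofBijective T hT.1).apply_symm_apply f
  have e2 : T ((Equiv.ofBijective T hT.1).symm g) = g :=
    (Equiv.ofBijective T hT.1).apply_symm_apply g
  have e3 : T ((Equiv.ofBijective T hT.1).symm h) = h :=
    (Equiv.ofBijective T hT.1).apply_symm_apply h
  rw [e1, e2, e3] at h1
  exact h1.symm

end Inv

theorem stmt4 [TopologicalSpace X] [T35Space X] [TopologicalSpace Y] [T35Space Y]
    [AddCommGroup E] [Module ℝ E] [TopologicalSpace E] [IsTopologicalAddGroup E]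
    [ContinuousSMul ℝ E] [T2Space E] [Nontrivial E]
    [AddCommGroup F] [Module ℝ F] [TopologicalSpace F] [IsTopologicalAddGroup F]
    [ContinuousSMul ℝ F] [T2Space F] [Nontrivial F]
    (A : Set (X → E)) (hA : A = Cset X E ∨ A = CbSet X E)
    (B : Set (Y → F)) (hB : B = Cset Y F ∨ B = CbSet Y F)
    (T : A → B) (hT : Biseparating T) :
    ∃ φ : StoneCech X ≃ₜ StoneCech Y,
      ∀ f g : A, ∀ U : Set (StoneCech X), IsOpen U →
        ((∀ x : X, stoneCechUnit x ∈ U → (f : X → E) x = (g : X → E) x) ↔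
          ∀ y : Y, stoneCechUnit y ∈ φ '' U → (T f : Y → F) y = (T g : Y → F) y) := by
  have hGA : Good A := by rcases hA with rfl | rfl; exacts [good_cset, good_cbset]
  have hGB : Good B := by rcases hB with rfl | rfl; exacts [good_cset, good_cbset]
  set S : B → A := fun b => (Equiv.ofBijective T hT.1).symm b with hSdef
  have hS : Biseparating S := biseparating_inv T hT
  have hTS : ∀ b, T (S b) = b := fun b => (Equiv.ofBijective T hT.1).apply_symm_apply b
  have hST : ∀ a, S (T a) = a := fun a => (Equiv.ofBijective T hT.1).symm_apply_apply a
  have hneT : ∀ y : Y, (sigmaSet T y).Nonempty := sigma_nonempty T hGA hGB hT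
  have hneS : ∀ x : X, (sigmaSet S x).Nonempty := sigma_nonempty S hGB hGA hS
  set ψb := stoneCechExtend (phi0_continuous S hGB hGA hS hneS) with hψb
  set φb := stoneCechExtend (phi0_continuous T hGA hGB hT hneT) with hφb
  have hψunit : ∀ x : X, ψb (stoneCechUnit x) = phi0 S hneS x := fun x =>
    congrFun (stoneCechExtend_extends (phi0_continuous S hGB hGA hS hneS)) x
  have hφunit : ∀ y : Y, φb (stoneCechUnit y) = phi0 T hneT y := fun y =>
    congrFun (stoneCechExtend_extends (phi0_continuous T hGA hGB hT hneT)) y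
  have hleft : ∀ p, φb (ψb p) = p := by
    have hfun : φb ∘ ψb = id := by
      refine denseRange_stoneCechUnit.equalizer
        ((continuous_stoneCechExtend _).comp (continuous_stoneCechExtend _))
        continuous_id ?_
      funext x
      simp only [Function.comp_apply, id_eq]
      rw [hψunit x]
      exact compat T S hGA hGB hT hS hST hneT hneS x
    exact fun p => congrFun hfun p
  have hright : ∀ q, ψb (φb q) = q := by
    have hfun : ψb ∘ φb = id := by
      refine denseRange_stoneCechUnit.equalizer
        ((continuous_stoneCechExtend _).comp (continuous_stoneCechExtend _))
        continuous_id ?_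
      funext y
      simp only [Function.comp_apply, id_eq]
      rw [hφunit y]
      exact compat S T hGB hGA hS hT hTS hneS hneT y
    exact fun q => congrFun hfun q
  set Φ : StoneCech X ≃ₜ StoneCech Y :=
    { toFun := ψb, invFun := φb, left_inv := hleft, right_inv := hright,
      continuous_toFun := continuous_stoneCechExtend _,
      continuous_invFun := continuous_stoneCechExtend _ } with hΦ
  have hΦapp : ∀ p, Φ p = ψb p := fun _ => rfl
  refine ⟨Φ, fun f g U hU => ⟨?_, ?_⟩⟩
  · intro h y hy
    by_contra hne2
    have hk := key T hGA hT hneT (f := f) (g := g) hne2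
    obtain ⟨p, hpU, hpe⟩ := hy
    have hφy : phi0 T hneT y = p := by
      rw [← hφunit y, ← hpe, hΦapp]
      exact hleft p
    rw [hφy] at hk
    obtain ⟨z, hzU, hzs⟩ := mem_closure_iff.mp hk U hU hpU
    obtain ⟨x, hx, rfl⟩ := hzs
    exact hx (h x hzU)
  · intro h x hxU
    by_contra hne2
    have hxk : (S (T f) : X → E) x ≠ (S (T g) : X → E) x := by
      rw [hST, hST]; exact hne2
    have hk := key S hGB hS hneS hxk
    have hOopen : IsOpen (Φ '' U) := Φ.isOpen_image.mpr hU
    have hmem : phi0 S hneS x ∈ Φ '' U := by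
      rw [← hψunit x, ← hΦapp]
      exact mem_image_of_mem _ hxU
    obtain ⟨z, hz, hzs⟩ := mem_closure_iff.mp hk _ hOopen hmem
    obtain ⟨y, hy, rfl⟩ := hzs
    exact hy (h y hz)

end Stmt4
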